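/- Let A(k) be a sequence of square matrices converging to a matrix A∞ whose spectral radius is strictly less than 1, and let b(k) be a bounded sequence of vectors converging to b∞. Then the sequence x(k+1) = A(k) x(k) + b(k), from any initial x(0), converges to (I - A∞)^{-1} b∞. -/

import Mathlib

open Matrix Filter

private lemma pi_norm_ofReal' {m : ℕ} (v : Fin m → ℝ) :
    ‖(fun i => (v i : ℂ))‖ = ‖v‖ := by
  apply le_antisymm
  · exact (pi_norm_le_iff_of_nonneg (norm_nonneg v)).2 fun i => by
      simpa [Complex.norm_real] using norm_le_pi_norm v i
  · exact (pi_norm_le_iff_of_nonneg (norm_nonneg _)).2 fun i => by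
      simpa [Complex.norm_real] using norm_le_pi_norm (fun i => (v i : ℂ)) i

private lemma pow_bound' {n : ℕ} (B : Matrix (Fin n) (Fin n) ℝ)
    (hρ : spectralRadius ℂ (B.map (Complex.ofReal)) < 1) :
    ∃ C : ℝ, 1 ≤ C ∧ ∃ r : ℝ, 0 < r ∧ r < 1 ∧
      ∀ (k : ℕ) (v : Fin n → ℝ), ‖B ^ k *ᵥ v‖ ≤ C * r ^ k * ‖v‖ := by
  letI : SeminormedRing (Matrix (Fin n) (Fin n) ℂ) := Matrix.linftyOpSemiNormedRing
  letI : NormedRing (Matrix (Fin n) (Fin n) ℂ) := Matrix.linftyOpNormedRing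
  letI : NormedAlgebra ℂ (Matrix (Fin n) (Fin n) ℂ) := Matrix.linftyOpNormedAlgebra
  letI : CompleteSpace (Matrix (Fin n) (Fin n) ℂ) := FiniteDimensional.complete ℂ _
  set a : Matrix (Fin n) (Fin n) ℂ := B.map (Complex.ofReal) with ha
  have hg := spectrum.pow_nnnorm_pow_one_div_tendsto_nhds_spectralRadius a
  have hmax : max (spectralRadius ℂ a) 2⁻¹ < 1 := by
    apply max_lt hρ
    simp [ENNReal.inv_lt_one]
  obtain ⟨c, hc1, hc2⟩ := exists_between hmax
  have hcev : ∀ᶠ k : ℕ in atTop, (‖a ^ k‖₊ : ENNReal) ^ (1 / (k:ℝ)) < c :=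
    hg.eventually_lt_const (lt_of_le_of_lt (le_max_left _ _) hc1)
  obtain ⟨N, hN⟩ := eventually_atTop.mp hcev
  have hctop : c ≠ ⊤ := (hc2.trans (by norm_num)).ne
  set r : ℝ := c.toReal with hr
  have hr1 : r < 1 := by
    have := (ENNReal.toReal_lt_toReal hctop (by norm_num)).mpr hc2
    simpa using this
  have hr0 : 0 < r := by
    have h2c : (2⁻¹ : ENNReal) < c := lt_of_le_of_lt (le_max_right _ _) hc1
    have := (ENNReal.toReal_lt_toReal (by norm_num) hctop).mpr h2c
    simp at this
    linarith
  have hkey : ∀ k, N ≤ k → 1 ≤ k → ‖a ^ k‖ ≤ r ^ k := by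
    intro k hNk h1k
    have hk := hN k hNk
    have hkne : (k : ℝ) ≠ 0 := Nat.cast_ne_zero.mpr (by omega)
    have h1 : ((‖a ^ k‖₊ : ENNReal) ^ (1 / (k:ℝ))) ^ (k : ℝ) ≤ c ^ (k : ℝ) :=
      ENNReal.rpow_le_rpow hk.le (by positivity)
    rw [← ENNReal.rpow_mul, one_div, inv_mul_cancel₀ hkne, ENNReal.rpow_one] at h1
    have h2 : (‖a ^ k‖₊ : ENNReal) ≤ c ^ k := by
      rwa [ENNReal.rpow_natCast] at h1
    have h3 := ENNReal.toReal_mono (by simp [ENNReal.pow_ne_top hctop]) h2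
    simpa [ENNReal.toReal_pow, ← hr] using h3
  set C : ℝ := 1 + ∑ j ∈ Finset.range (N + 1), ‖a ^ j‖ / r ^ j with hCdef
  have hsumnn : 0 ≤ ∑ j ∈ Finset.range (N + 1), ‖a ^ j‖ / r ^ j :=
    Finset.sum_nonneg fun j _ => by positivity
  have hC1 : 1 ≤ C := by simp [hCdef]; linarith
  refine ⟨C, hC1, r, hr0, hr1, ?_⟩
  intro k v
  have hmap : a ^ k = (B ^ k).map (Complex.ofReal) := by
    have := map_pow (RingHom.mapMatrix (m := Fin n) Complex.ofRealHom) B k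
    exact this.symm
  have hvec : (a ^ k) *ᵥ (fun i => (v i : ℂ)) = fun i => ((B ^ k *ᵥ v) i : ℂ) := by
    funext i
    rw [hmap]
    exact (RingHom.map_mulVec Complex.ofRealHom (B ^ k) v i).symm
  have hnorm : ‖B ^ k *ᵥ v‖ ≤ ‖a ^ k‖ * ‖v‖ := by
    calc ‖B ^ k *ᵥ v‖ = ‖(a ^ k) *ᵥ (fun i => (v i : ℂ))‖ := by
          rw [hvec, pi_norm_ofReal']
      _ ≤ ‖a ^ k‖ * ‖(fun i => (v i : ℂ))‖ := Matrix.linfty_opNorm_mulVec _ _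
      _ = ‖a ^ k‖ * ‖v‖ := by rw [pi_norm_ofReal']
  have hCk : ‖a ^ k‖ ≤ C * r ^ k := by
    rcases le_or_gt (max N 1) k with hk | hk
    · calc ‖a ^ k‖ ≤ r ^ k := hkey k (le_of_max_le_left hk) (le_of_max_le_right hk)
        _ ≤ C * r ^ k := le_mul_of_one_le_left (by positivity) hC1
    · have hkN : k ∈ Finset.range (N + 1) := by
        simp only [Finset.mem_range]
        rcases lt_max_iff.mp hk with h | h <;> omega
      have := Finset.single_le_sum (f := fun j => ‖a ^ j‖ / r ^ j)
        (fun j _ => by positivity) hkN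
      have h4 : ‖a ^ k‖ / r ^ k ≤ C := by
        simp only [hCdef]; linarith
      calc ‖a ^ k‖ = ‖a ^ k‖ / r ^ k * r ^ k := by field_simp
        _ ≤ C * r ^ k := by
          apply mul_le_mul_of_nonneg_right h4 (by positivity)
  calc ‖B ^ k *ᵥ v‖ ≤ ‖a ^ k‖ * ‖v‖ := hnorm
    _ ≤ C * r ^ k * ‖v‖ := mul_le_mul_of_nonneg_right hCk (norm_nonneg v)

private lemma ent_bound' {n : ℕ} (M : Matrix (Fin n) (Fin n) ℝ) (δ : ℝ) (hδ : 0 ≤ δ)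
    (h : ∀ i j, |M i j| ≤ δ) (v : Fin n → ℝ) : ‖M *ᵥ v‖ ≤ n * δ * ‖v‖ := by
  have h0 : (0:ℝ) ≤ (n:ℝ) * δ * ‖v‖ := by positivity
  rw [pi_norm_le_iff_of_nonneg h0]
  intro i
  have : (M *ᵥ v) i = ∑ j, M i j * v j := by
    simp [Matrix.mulVec, dotProduct]
  rw [this]
  calc ‖∑ j, M i j * v j‖ ≤ ∑ j, ‖M i j * v j‖ := norm_sum_le _ _
    _ ≤ ∑ _j : Fin n, δ * ‖v‖ := by
        apply Finset.sum_le_sum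
        intro j _
        rw [norm_mul]
        exact mul_le_mul (h i j) (norm_le_pi_norm v j) (norm_nonneg _) hδ
    _ = n * δ * ‖v‖ := by
        simp [Finset.sum_const, Finset.card_univ, mul_assoc]

private lemma seq_tendsto_zero' {u w : ℕ → ℝ} {q : ℝ} (hq0 : 0 ≤ q) (hq1 : q < 1)
    (hu : ∀ k, 0 ≤ u k) (hw : Tendsto w atTop (nhds 0))
    (h : ∀ᶠ k in atTop, u (k + 1) ≤ q * u k + w k) : Tendsto u atTop (nhds 0) := by
  rw [Metric.tendsto_atTop]
  intro ε hε
  obtain ⟨K, hK⟩ := eventually_atTop.mp h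
  obtain ⟨N', hN'⟩ := Metric.tendsto_atTop.mp hw ((1 - q) * (ε / 2))
    (by have : 0 < 1 - q := by linarith
        positivity)
  set N := max K N' with hN
  have hwN : ∀ k, N ≤ k → w k ≤ (1 - q) * (ε / 2) := by
    intro k hk
    have := hN' k (le_trans (le_max_right _ _) hk)
    rw [Real.dist_eq, sub_zero] at this
    exact (le_abs_self _).trans this.le
  have hind : ∀ t, u (N + t) ≤ q ^ t * u N + ε / 2 := by
    intro t
    induction t with
    | zero => simp; linarith [hε]
    | succ t ih =>
      have hstep := hK (N + t) (le_trans (le_max_left _ _) (Nat.le_add_right _ _))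
      have := hwN (N + t) (Nat.le_add_right _ _)
      calc u (N + (t + 1)) = u ((N + t) + 1) := by ring_nf
        _ ≤ q * u (N + t) + w (N + t) := hstep
        _ ≤ q * (q ^ t * u N + ε / 2) + (1 - q) * (ε / 2) := by
            have := mul_le_mul_of_nonneg_left ih hq0
            linarith
        _ = q ^ (t + 1) * u N + (q * (ε/2) + (1 - q) * (ε/2)) := by ring
        _ ≤ q ^ (t + 1) * u N + ε / 2 := by nlinarith
  have hpt : Tendsto (fun t => q ^ t * u N) atTop (nhds 0) := by
    simpa using (tendsto_pow_atTop_nhds_zero_of_lt_one hq0 hq1).mul_const (u N)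
  obtain ⟨T, hT⟩ := Metric.tendsto_atTop.mp hpt (ε / 2) (by positivity)
  refine ⟨N + T, fun k hk => ?_⟩
  have hkN : N ≤ k := by omega
  have hdecomp : k = N + (k - N) := by omega
  have hTk : T ≤ k - N := by omega
  have h1 : u k ≤ q ^ (k - N) * u N + ε / 2 := by
    have := hind (k - N)
    rwa [← hdecomp] at this
  have h2 := hT (k - N) hTk
  rw [Real.dist_eq, sub_zero] at h2
  have h3 : q ^ (k - N) * u N < ε / 2 := (le_abs_self _).trans_lt h2
  rw [Real.dist_eq, sub_zero, abs_of_nonneg (hu k)]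
  linarith

/-- If `A(k) → A∞` with spectral radius of `A∞` less than one, and `b(k)` is
bounded with `b(k) → b∞`, then `x(k+1) = A(k) x(k) + b(k)` converges to
`(I - A∞)⁻¹ b∞` from any initial condition. -/
theorem stmt_5 {n : ℕ} (A : ℕ → Matrix (Fin n) (Fin n) ℝ)
    (Ainf : Matrix (Fin n) (Fin n) ℝ)
    (b : ℕ → (Fin n → ℝ)) (binf : Fin n → ℝ) (x : ℕ → (Fin n → ℝ))
    (hA : Tendsto A atTop (nhds Ainf))
    (hρ : spectralRadius ℂ (Ainf.map (Complex.ofReal)) < 1)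
    (hb : Tendsto b atTop (nhds binf))
    (hbdd : ∃ M : ℝ, ∀ k, ‖b k‖ ≤ M)
    (hx : ∀ k, x (k + 1) = A k *ᵥ x k + b k) :
    Tendsto x atTop (nhds ((1 - Ainf)⁻¹ *ᵥ binf)) := by
  obtain ⟨C, hC1, r, hr0, hr1, hpow⟩ := pow_bound' Ainf hρ
  have hC0 : (0:ℝ) < C := lt_of_lt_of_le one_pos hC1
  -- (1 - Ainf) is invertible
  have hinj : Function.Injective ((1 - Ainf).mulVec) := by
    intro v w hvw
    have hsub : (1 - Ainf) *ᵥ (v - w) = 0 := by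
      rw [Matrix.mulVec_sub, hvw, sub_self]
    set u := v - w with hu
    rw [Matrix.sub_mulVec, Matrix.one_mulVec] at hsub
    have hfixu : Ainf *ᵥ u = u := (sub_eq_zero.mp hsub).symm
    have hpowu : ∀ k, Ainf ^ k *ᵥ u = u := by
      intro k
      induction k with
      | zero => simp [Matrix.one_mulVec]
      | succ k ih => rw [pow_succ, ← Matrix.mulVec_mulVec, hfixu, ih]
    have hn : ∀ k : ℕ, ‖u‖ ≤ C * r ^ k * ‖u‖ := by
      intro k
      have := hpow k u
      rwa [hpowu k] at this
    have htend : Tendsto (fun k : ℕ => C * r ^ k * ‖u‖) atTop (nhds 0) := by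
      have := ((tendsto_pow_atTop_nhds_zero_of_lt_one hr0.le hr1).const_mul C).mul_const ‖u‖
      simpa using this
    have hle : ‖u‖ ≤ 0 := ge_of_tendsto htend (Eventually.of_forall hn)
    have : u = 0 := norm_le_zero_iff.mp hle
    exact sub_eq_zero.mp this
  have hdet : IsUnit (1 - Ainf).det :=
    (Matrix.isUnit_iff_isUnit_det _).mp (Matrix.mulVec_injective_iff_isUnit.mp hinj)
  set xs : Fin n → ℝ := (1 - Ainf)⁻¹ *ᵥ binf with hxs
  have hfix : Ainf *ᵥ xs + binf = xs := by
    have h1 : (1 - Ainf) *ᵥ xs = binf := by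
      rw [hxs, Matrix.mulVec_mulVec, Matrix.mul_nonsing_inv _ hdet, Matrix.one_mulVec]
    rw [Matrix.sub_mulVec, Matrix.one_mulVec] at h1
    rw [← h1]
    abel
  -- the adapted Lyapunov functional
  set p : ℝ := (1 + r) / 2 with hp
  have hrp : r < p := by rw [hp]; linarith
  have hp0 : (0:ℝ) < p := by rw [hp]; linarith
  have hp1 : p < 1 := by rw [hp]; linarith
  have hrp0 : (0:ℝ) ≤ r / p := by positivity
  have hrp1 : r / p < 1 := (div_lt_one hp0).mpr hrp
  set g : (Fin n → ℝ) → ℕ → ℝ := fun v k => p⁻¹ ^ k * ‖Ainf ^ k *ᵥ v‖ with hg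
  have hgnn : ∀ v k, 0 ≤ g v k := fun v k =>
    mul_nonneg (by positivity) (norm_nonneg _)
  have hgle : ∀ v k, g v k ≤ (C * ‖v‖) * (r / p) ^ k := by
    intro v k
    have h1 : g v k ≤ p⁻¹ ^ k * (C * r ^ k * ‖v‖) :=
      mul_le_mul_of_nonneg_left (hpow k v) (by positivity)
    calc g v k ≤ p⁻¹ ^ k * (C * r ^ k * ‖v‖) := h1
      _ = (C * ‖v‖) * (r / p) ^ k := by
        rw [div_pow, inv_pow]
        field_simp
  have hsum : ∀ v, Summable (g v) := fun v =>
    Summable.of_nonneg_of_le (hgnn v) (hgle v)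
      ((summable_geometric_of_lt_one hrp0 hrp1).mul_left _)
  set Φ : (Fin n → ℝ) → ℝ := fun v => ∑' k, g v k with hΦ
  have hΦ_ge : ∀ v, ‖v‖ ≤ Φ v := by
    intro v
    have h := Summable.le_tsum (hsum v) 0 (fun j _ => hgnn v j)
    have h0 : g v 0 = ‖v‖ := by simp [hg, Matrix.one_mulVec]
    rw [h0] at h
    exact h
  have hΦ_nonneg : ∀ v, 0 ≤ Φ v := fun v => (norm_nonneg v).trans (hΦ_ge v)
  set C₂ : ℝ := C * (1 - r / p)⁻¹ with hC₂
  have hC₂0 : (0:ℝ) < C₂ := by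
    have h1 : 0 < 1 - r / p := by linarith
    rw [hC₂]; positivity
  have hΦ_le : ∀ v, Φ v ≤ C₂ * ‖v‖ := by
    intro v
    have h1 : Φ v ≤ ∑' k, (C * ‖v‖) * (r/p)^k :=
      Summable.tsum_le_tsum (hgle v) (hsum v)
        ((summable_geometric_of_lt_one hrp0 hrp1).mul_left _)
    rw [tsum_mul_left, tsum_geometric_of_lt_one hrp0 hrp1] at h1
    calc Φ v ≤ C * ‖v‖ * (1 - r/p)⁻¹ := h1
      _ = C₂ * ‖v‖ := by rw [hC₂]; ring
  have hΦ_add : ∀ v w, Φ (v + w) ≤ Φ v + Φ w := by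
    intro v w
    have h1 : ∀ k, g (v + w) k ≤ g v k + g w k := by
      intro k
      simp only [hg]
      rw [Matrix.mulVec_add]
      calc p⁻¹ ^ k * ‖Ainf ^ k *ᵥ v + Ainf ^ k *ᵥ w‖
          ≤ p⁻¹ ^ k * (‖Ainf ^ k *ᵥ v‖ + ‖Ainf ^ k *ᵥ w‖) :=
            mul_le_mul_of_nonneg_left (norm_add_le _ _) (by positivity)
        _ = p⁻¹ ^ k * ‖Ainf ^ k *ᵥ v‖ + p⁻¹ ^ k * ‖Ainf ^ k *ᵥ w‖ := mul_add _ _ _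
    calc Φ (v + w) ≤ ∑' k, (g v k + g w k) :=
          Summable.tsum_le_tsum h1 (hsum _) ((hsum v).add (hsum w))
      _ = Φ v + Φ w := Summable.tsum_add (hsum v) (hsum w)
  have hΦ_contr : ∀ v, Φ (Ainf *ᵥ v) ≤ p * Φ v := by
    intro v
    have hterm : ∀ k, g (Ainf *ᵥ v) k = p * g v (k + 1) := by
      intro k
      simp only [hg]
      rw [Matrix.mulVec_mulVec, ← pow_succ, pow_succ p⁻¹ k]
      field_simp
    have hshift : ∑' k, g v (k + 1) ≤ Φ v :=
      Summable.tsum_le_tsum_of_inj (fun k => k + 1) (add_left_injective 1)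
        (fun c _ => hgnn v c) (fun k => le_rfl)
        ((hsum v).comp_injective (add_left_injective 1)) (hsum v)
    calc Φ (Ainf *ᵥ v) = ∑' k, p * g v (k + 1) := tsum_congr hterm
      _ = p * ∑' k, g v (k + 1) := tsum_mul_left
      _ ≤ p * Φ v := mul_le_mul_of_nonneg_left hshift hp0.le
  -- error sequence
  set e : ℕ → Fin n → ℝ := fun k => x k - xs with he_def
  set d : ℕ → Fin n → ℝ := fun k => (A k - Ainf) *ᵥ xs + (b k - binf) with hd_def
  have hrec : ∀ k, e (k + 1) = Ainf *ᵥ e k + ((A k - Ainf) *ᵥ e k + d k) := by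
    intro k
    have hb' : binf = xs - Ainf *ᵥ xs := by rw [eq_sub_iff_add_eq, add_comm]; exact hfix
    simp only [he_def, hd_def, hx k, Matrix.sub_mulVec, Matrix.mulVec_sub]
    rw [hb']
    abel
  set u : ℕ → ℝ := fun k => Φ (e k) with hu_def
  have hu_nn : ∀ k, 0 ≤ u k := fun k => hΦ_nonneg _
  -- d → 0
  have hAtend : Tendsto (fun k => A k - Ainf) atTop (nhds 0) := by
    have := hA.sub (tendsto_const_nhds (x := Ainf) (f := atTop))
    simpa using this
  have hdtend : Tendsto d atTop (nhds 0) := by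
    have h1 : Tendsto (fun k => (A k - Ainf) *ᵥ xs) atTop (nhds 0) := by
      have hcont : Continuous fun M : Matrix (Fin n) (Fin n) ℝ => M *ᵥ xs :=
        continuous_id.matrix_mulVec continuous_const
      have := (hcont.tendsto 0).comp hAtend
      simpa [Matrix.zero_mulVec, Function.comp_def] using this
    have h2 : Tendsto (fun k => b k - binf) atTop (nhds 0) := by
      have := hb.sub (tendsto_const_nhds (x := binf) (f := atTop))
      simpa using this
    have := h1.add h2
    simpa [hd_def] using this
  have hwtend : Tendsto (fun k => C₂ * ‖d k‖) atTop (nhds 0) := by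
    have h1 := tendsto_zero_iff_norm_tendsto_zero.mp hdtend
    have := h1.const_mul C₂
    simpa using this
  -- eventual contraction
  set q : ℝ := (1 + p) / 2 with hq
  have hpq : p < q := by rw [hq]; linarith
  have hq0 : (0:ℝ) ≤ q := by rw [hq]; linarith
  have hq1 : q < 1 := by rw [hq]; linarith
  set δ : ℝ := (q - p) / (C₂ * (n + 1)) with hδ
  have hδ0 : (0:ℝ) < δ := by
    rw [hδ]
    have h1 : (0:ℝ) < q - p := by linarith
    positivity
  have hent : ∀ᶠ k in atTop, ∀ i j, |A k i j - Ainf i j| ≤ δ := by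
    have hij : ∀ i j, Tendsto (fun k => A k i j) atTop (nhds (Ainf i j)) := by
      intro i j
      have hc : Continuous fun M : Matrix (Fin n) (Fin n) ℝ => M i j :=
        continuous_id.matrix_elem i j
      exact (hc.tendsto Ainf).comp hA
    refine eventually_all.mpr fun i => eventually_all.mpr fun j => ?_
    obtain ⟨N, hN⟩ := Metric.tendsto_atTop.mp (hij i j) δ hδ0
    refine eventually_atTop.mpr ⟨N, fun k hk => ?_⟩
    have := hN k hk
    rw [Real.dist_eq] at this
    exact this.le
  have hCnδ : C₂ * (n * δ) ≤ q - p := by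
    have h1 : (0:ℝ) < C₂ * (n + 1) := by positivity
    have h2 : C₂ * (n * δ) = (q - p) * (C₂ * n) / (C₂ * (n + 1)) := by
      rw [hδ]; field_simp
    rw [h2, div_le_iff₀ h1]
    have hqp : (0:ℝ) ≤ q - p := by linarith
    exact mul_le_mul_of_nonneg_left (by nlinarith [hC₂0.le]) hqp
  have hkey : ∀ᶠ k in atTop, u (k + 1) ≤ q * u k + C₂ * ‖d k‖ := by
    filter_upwards [hent] with k hk
    have h1 : Φ (e (k + 1)) ≤ p * Φ (e k) + (Φ ((A k - Ainf) *ᵥ e k) + Φ (d k)) := by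
      rw [hrec k]
      calc Φ (Ainf *ᵥ e k + ((A k - Ainf) *ᵥ e k + d k))
          ≤ Φ (Ainf *ᵥ e k) + Φ ((A k - Ainf) *ᵥ e k + d k) := hΦ_add _ _
        _ ≤ Φ (Ainf *ᵥ e k) + (Φ ((A k - Ainf) *ᵥ e k) + Φ (d k)) := by
            linarith [hΦ_add ((A k - Ainf) *ᵥ e k) (d k)]
        _ ≤ p * Φ (e k) + (Φ ((A k - Ainf) *ᵥ e k) + Φ (d k)) := by
            linarith [hΦ_contr (e k)]
    have h2 : ‖(A k - Ainf) *ᵥ e k‖ ≤ n * δ * ‖e k‖ :=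
      ent_bound' _ δ hδ0.le (fun i j => by
        simpa [Matrix.sub_apply] using hk i j) (e k)
    have h3 : Φ ((A k - Ainf) *ᵥ e k) ≤ (q - p) * u k := by
      calc Φ ((A k - Ainf) *ᵥ e k) ≤ C₂ * ‖(A k - Ainf) *ᵥ e k‖ := hΦ_le _
        _ ≤ C₂ * (n * δ * ‖e k‖) := mul_le_mul_of_nonneg_left h2 hC₂0.le
        _ = (C₂ * (n * δ)) * ‖e k‖ := by ring
        _ ≤ (q - p) * ‖e k‖ := mul_le_mul_of_nonneg_right hCnδ (norm_nonneg _)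
        _ ≤ (q - p) * u k := by
            have := hΦ_ge (e k)
            have hqp : (0:ℝ) ≤ q - p := by linarith
            exact mul_le_mul_of_nonneg_left (by exact this) hqp
    have h4 : Φ (d k) ≤ C₂ * ‖d k‖ := hΦ_le _
    have h5 : u (k + 1) ≤ p * u k + (Φ ((A k - Ainf) *ᵥ e k) + Φ (d k)) := h1
    have hu_eq : u k = Φ (e k) := rfl
    linarith
  have hu0 : Tendsto u atTop (nhds 0) := seq_tendsto_zero' hq0 hq1 hu_nn hwtend hkey
  have he0 : Tendsto e atTop (nhds 0) := by
    rw [tendsto_zero_iff_norm_tendsto_zero]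
    exact squeeze_zero (fun k => norm_nonneg _) (fun k => hΦ_ge (e k)) hu0
  have hxe : Tendsto x atTop (nhds (0 + xs)) := by
    have hxeq : x = fun k => e k + xs := by
      funext k
      simp [he_def]
    rw [hxeq]
    exact he0.add tendsto_const_nhds
  simpa using hxe
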